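/- Suppose the extra data is a single point, i.e. X_ext consists of the single row x_extᵀ, set v = Π⊥_std x_ext, and suppose v ≠ 0 and there exists w ∈ Null(X_std) with wᵀ x_ext = 0 and wᵀ Σ v ≠ 0 (in particular v is a mixture of eigenvectors of Σ with different eigenvalues, not an eigenvector). Then there exists a true parameter θ⋆ ∈ ℝ^d for which augmentation strictly increases the standard error: L_std(θ̂_aug) > L_std(θ̂_std). -/

import Mathlib

open Matrix BigOperators

/-- Standard (population) error of `θ` w.r.t. covariance `S` and true parameter `θstar`:
`(θ − θ⋆)ᵀ Σ (θ − θ⋆)`. -/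
def Lstd {d : ℕ} (S : Matrix (Fin d) (Fin d) ℝ) (θstar θ : Fin d → ℝ) : ℝ :=
  (θ - θstar) ⬝ᵥ S.mulVec (θ - θstar)

/-- `θ` is the minimum Euclidean-norm solution of the constraint `C`. -/
def IsMinNormInterp {d : ℕ} (C : (Fin d → ℝ) → Prop) (θ : Fin d → ℝ) : Prop :=
  C θ ∧ ∀ θ', C θ' → θ ⬝ᵥ θ ≤ θ' ⬝ᵥ θ'

/-- `P` is the orthogonal projection matrix onto `Null(X)`:
symmetric, idempotent, range contained in `Null(X)`, and fixing `Null(X)`. -/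
def IsOrthProjNull {n d : ℕ} (X : Matrix (Fin n) (Fin d) ℝ)
    (P : Matrix (Fin d) (Fin d) ℝ) : Prop :=
  Pᵀ = P ∧ P * P = P ∧ (∀ v, X.mulVec (P.mulVec v) = 0) ∧
    (∀ v, X.mulVec v = 0 → P.mulVec v = v)

/-- `P` is the orthogonal projection matrix onto `Null(X1) ∩ Null(X2)`. -/
def IsOrthProjNull2 {n m d : ℕ} (X1 : Matrix (Fin n) (Fin d) ℝ)
    (X2 : Matrix (Fin m) (Fin d) ℝ) (P : Matrix (Fin d) (Fin d) ℝ) : Prop :=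
  Pᵀ = P ∧ P * P = P ∧ (∀ v, X1.mulVec (P.mulVec v) = 0 ∧ X2.mulVec (P.mulVec v) = 0) ∧
    (∀ v, X1.mulVec v = 0 → X2.mulVec v = 0 → P.mulVec v = v)

/-- Corollary characterization (b), second part, of the paper: if the projection
`v = Pstd x_ext` of a single extra point is nonzero and there is `w` in the null space
of the standard data with `w ⟂ x_ext` and `wᵀ Σ v ≠ 0` (so `v` is a mixture of
eigenvectors of `Σ` with different eigenvalues), then there exists a true parameter
for which augmentation strictly increases the standard error. -/
theorem mixture_eigenvector_augmentation_hurts {n d : ℕ}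
    (Xstd : Matrix (Fin n) (Fin d) ℝ)
    (S : Matrix (Fin d) (Fin d) ℝ) (hS : S.PosSemidef)
    (Pstd : Matrix (Fin d) (Fin d) ℝ) (hPstd : IsOrthProjNull Xstd Pstd)
    (xext w : Fin d → ℝ)
    (hv : Pstd.mulVec xext ≠ 0)
    (hw1 : Xstd.mulVec w = 0)
    (hw2 : w ⬝ᵥ xext = 0)
    (hw3 : w ⬝ᵥ S.mulVec (Pstd.mulVec xext) ≠ 0) :
    ∃ (θstar θstd θaug : Fin d → ℝ),
      IsMinNormInterp (fun θ => Xstd.mulVec θ = Xstd.mulVec θstar) θstd ∧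
      IsMinNormInterp
        (fun θ => Xstd.mulVec θ = Xstd.mulVec θstar ∧ xext ⬝ᵥ θ = xext ⬝ᵥ θstar) θaug ∧
      Lstd S θstar θstd < Lstd S θstar θaug := by
  obtain ⟨hPT, hPP, hPn, hPf⟩ := hPstd
  have hsymm : ∀ a b : Fin d → ℝ, a ⬝ᵥ Pstd.mulVec b = Pstd.mulVec a ⬝ᵥ b := by
    intro a b
    rw [Matrix.dotProduct_mulVec]
    nth_rewrite 1 [← hPT]
    rw [Matrix.vecMul_transpose]
  have hSsymm : ∀ a b : Fin d → ℝ, a ⬝ᵥ S.mulVec b = b ⬝ᵥ S.mulVec a := by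
    intro a b
    have hST : Sᵀ = S := by
      rw [← Matrix.conjTranspose_eq_transpose_of_trivial]; exact hS.1
    rw [Matrix.dotProduct_mulVec]
    nth_rewrite 1 [← hST]
    rw [Matrix.vecMul_transpose, dotProduct_comm]
  set v : Fin d → ℝ := Pstd.mulVec xext with hvdef
  have hXv : Xstd.mulVec v = 0 := hPn xext
  have hPv : Pstd.mulVec v = v := by
    rw [hvdef, Matrix.mulVec_mulVec, hPP]
  have hPw : Pstd.mulVec w = w := hPf w hw1
  have hwv : w ⬝ᵥ v = 0 := by
    rw [hvdef, hsymm, hPw, hw2]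
  have hxv : xext ⬝ᵥ v = v ⬝ᵥ v := by
    conv_lhs => rw [← hPv]
    rw [hsymm, ← hvdef]
  set c : ℝ := w ⬝ᵥ S.mulVec v with hcdef
  set q : ℝ := v ⬝ᵥ S.mulVec v with hqdef
  have hq : 0 ≤ q := by
    have := hS.dotProduct_mulVec_nonneg v; simpa [hqdef] using this
  set b : ℝ := -c / (q + 1) with hbdef
  set θstar : Fin d → ℝ := w + b • v with hθs
  have hXstar : Xstd.mulVec θstar = 0 := by
    rw [hθs, Matrix.mulVec_add, Matrix.mulVec_smul, hw1, hXv]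
    simp
  have hxstar : xext ⬝ᵥ θstar = b * (v ⬝ᵥ v) := by
    rw [hθs, dotProduct_add, dotProduct_smul, dotProduct_comm xext w,
      hw2, hxv]
    simp [smul_eq_mul]
  refine ⟨θstar, 0, b • v, ?_, ?_, ?_⟩
  · constructor
    · simp [hXstar, Matrix.mulVec_zero]
    · intro θ' _
      simpa using dotProduct_star_self_nonneg θ'
  · constructor
    · constructor
      · rw [hXstar, Matrix.mulVec_smul, hXv]; simp
      · rw [hxstar, dotProduct_smul, hxv]; simp [smul_eq_mul]
    · rintro θ' ⟨h1, h2⟩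
      rw [hXstar] at h1
      have hvθ : v ⬝ᵥ θ' = b * (v ⬝ᵥ v) := by
        have : v ⬝ᵥ θ' = xext ⬝ᵥ θ' := by
          conv_rhs => rw [← hPf θ' h1]
          rw [hsymm, ← hvdef]
        rw [this, h2, hxstar]
      have hexp : θ' ⬝ᵥ θ' = (b • v) ⬝ᵥ (b • v) + (θ' - b • v) ⬝ᵥ (θ' - b • v) := by
        have e1 : (θ' - b • v) ⬝ᵥ (θ' - b • v)
            = θ' ⬝ᵥ θ' - 2 * (b * (v ⬝ᵥ θ')) + b * b * (v ⬝ᵥ v) := by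
          simp only [sub_dotProduct, dotProduct_sub, smul_dotProduct,
            dotProduct_smul, smul_eq_mul, dotProduct_comm v θ']
          ring
        have e2 : (b • v) ⬝ᵥ (b • v) = b * b * (v ⬝ᵥ v) := by
          simp only [smul_dotProduct, dotProduct_smul, smul_eq_mul]; ring
        rw [e1, e2, hvθ]; ring
      have hnn : 0 ≤ (θ' - b • v) ⬝ᵥ (θ' - b • v) := by
        simpa using dotProduct_star_self_nonneg (θ' - b • v)
      linarith
  · have hL0 : Lstd S θstar 0 = w ⬝ᵥ S.mulVec w + 2 * b * c + b * b * q := by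
      unfold Lstd
      rw [zero_sub, hθs]
      simp only [Matrix.mulVec_neg, neg_dotProduct, dotProduct_neg,
        Matrix.mulVec_add, Matrix.mulVec_smul, add_dotProduct, dotProduct_add,
        smul_dotProduct, dotProduct_smul, smul_eq_mul, neg_neg]
      rw [hSsymm v w]
      simp only [← hcdef, ← hqdef]
      ring
    have hLa : Lstd S θstar (b • v) = w ⬝ᵥ S.mulVec w := by
      unfold Lstd
      have : b • v - θstar = -w := by rw [hθs]; abel
      rw [this]
      simp [Matrix.mulVec_neg, neg_dotProduct, dotProduct_neg]
    rw [hL0, hLa]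
    have hc2 : 0 < c * c := mul_self_pos.mpr hw3
    have hq1 : (0:ℝ) < q + 1 := by linarith
    have hkey : 2 * b * c + b * b * q < 0 := by
      rw [hbdef]
      have heq : 2 * (-c/(q+1)) * c + (-c/(q+1)) * (-c/(q+1)) * q
          = (c*c) * (q - 2*(q+1)) / ((q+1)*(q+1)) := by field_simp; ring
      rw [heq]
      apply div_neg_of_neg_of_pos
      · nlinarith
      · positivity
    linarith
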